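/- Uniform bound for the right inverse: there exists a constant c > 0, depending only on the diagonal entries a₁,…,aₙ of A and independent of T, such that for every T > 0, every continuous η : [−T,T] → ℝⁿ, and every continuously differentiable ζ : [−T,T] → ℝⁿ satisfying ζ′(s) + A ζ(s) = η(s) for all s ∈ [−T,T], p₊ζ(−T) = 0, and p₋ζ(T) = 0, one has ‖ζ‖_{W^{1,2}([−T,T])} ≤ c · ‖η‖_{L²([−T,T])}. -/

import Mathlib

open Set intervalIntegral

lemma comp_bound (T b : ℝ) (hT : 0 < T) (hb : b ≠ 0)
    (f g h : ℝ → ℝ)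
    (hf : ∀ s ∈ Icc (-T) T, HasDerivWithinAt f (g s) (Icc (-T) T) s)
    (hg : ContinuousOn g (Icc (-T) T))
    (hh : ContinuousOn h (Icc (-T) T))
    (hode : ∀ s ∈ Icc (-T) T, g s + b * f s = h s)
    (hbc : (0 < b ∧ f (-T) = 0) ∨ (b < 0 ∧ f T = 0)) :
    ∫ s in (-T)..T, (f s ^ 2 + g s ^ 2) ≤ (1 / b ^ 2 + 4) * ∫ s in (-T)..T, h s ^ 2 := by
  have hTT : (-T) ≤ T := by linarith
  have huIcc : uIcc (-T) T = Icc (-T) T := uIcc_of_le hTT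
  have cf : ContinuousOn f (Icc (-T) T) := fun s hs => (hf s hs).continuousWithinAt
  -- integrability
  have If : IntervalIntegrable (fun s => f s ^ 2) MeasureTheory.volume (-T) T := by
    apply ContinuousOn.intervalIntegrable; rw [huIcc]; exact cf.pow 2
  have Ig : IntervalIntegrable (fun s => g s ^ 2) MeasureTheory.volume (-T) T := by
    apply ContinuousOn.intervalIntegrable; rw [huIcc]; exact hg.pow 2
  have Ih : IntervalIntegrable (fun s => h s ^ 2) MeasureTheory.volume (-T) T := by
    apply ContinuousOn.intervalIntegrable; rw [huIcc]; exact hh.pow 2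
  have Ifg : IntervalIntegrable (fun s => 2 * f s * g s) MeasureTheory.volume (-T) T := by
    apply ContinuousOn.intervalIntegrable; rw [huIcc]
    exact (continuousOn_const.mul cf).mul hg
  have Ifh : IntervalIntegrable (fun s => 2 * f s * h s) MeasureTheory.volume (-T) T := by
    apply ContinuousOn.intervalIntegrable; rw [huIcc]
    exact (continuousOn_const.mul cf).mul hh
  -- FTC
  have ftc : ∫ s in (-T)..T, 2 * f s * g s = f T ^ 2 - f (-T) ^ 2 := by
    apply integral_eq_sub_of_hasDeriv_right_of_le hTT (cf.pow 2) _ Ifg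
    intro x hx
    have hx' : x ∈ Icc (-T) T := Ioo_subset_Icc_self hx
    have hd : HasDerivAt f (g x) x :=
      (hf x hx').hasDerivAt (Icc_mem_nhds hx.1 hx.2)
    have := (hd.pow 2).hasDerivWithinAt (s := Ioi x)
    convert this using 1
    ring
  -- rewrite 2fg = 2fh - 2b f^2 on the interval
  have split : ∫ s in (-T)..T, 2 * f s * g s
      = (∫ s in (-T)..T, 2 * f s * h s) - 2 * b * ∫ s in (-T)..T, f s ^ 2 := by
    rw [← intervalIntegral.integral_const_mul, ← intervalIntegral.integral_sub Ifh (If.const_mul _)]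
    apply intervalIntegral.integral_congr
    intro s hs
    rw [huIcc] at hs
    have := hode s hs
    simp only []
    linear_combination 2 * f s * (hode s hs)
  set H := ∫ s in (-T)..T, h s ^ 2 with hH
  set B := ∫ s in (-T)..T, f s ^ 2 with hB
  have hHnn : 0 ≤ H := intervalIntegral.integral_nonneg hTT (fun s _ => sq_nonneg _)
  have hBnn : 0 ≤ B := intervalIntegral.integral_nonneg hTT (fun s _ => sq_nonneg _)
  have hb2 : (0:ℝ) < b ^ 2 := by positivity
  -- pointwise AM-GM helper
  have amgm : ∀ c x y : ℝ, 0 < c → 2 * x * y ≤ c * x ^ 2 + y ^ 2 / c := by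
    intro c x y hc
    rw [← sub_nonneg]
    have key : c * x ^ 2 + y ^ 2 / c - 2 * x * y = (c * x - y) ^ 2 / c := by
      field_simp; ring
    rw [key]; positivity
  have Irhs : IntervalIntegrable (fun s => |b| * f s ^ 2 + h s ^ 2 / |b|)
      MeasureTheory.volume (-T) T := by
    apply ContinuousOn.intervalIntegrable; rw [huIcc]
    exact (continuousOn_const.mul (cf.pow 2)).add ((hh.pow 2).div_const _)
  have habs : (0:ℝ) < |b| := abs_pos.mpr hb
  have rhs_eq : ∫ s in (-T)..T, (|b| * f s ^ 2 + h s ^ 2 / |b|)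
      = |b| * B + H / |b| := by
    rw [intervalIntegral.integral_add ((If.const_mul _)) (Ih.div_const _),
      intervalIntegral.integral_const_mul, intervalIntegral.integral_div]
  have upper : ∫ s in (-T)..T, 2 * f s * h s ≤ |b| * B + H / |b| := by
    rw [← rhs_eq]
    apply intervalIntegral.integral_mono_on hTT Ifh Irhs
    intro s hs
    exact amgm |b| (f s) (h s) habs
  have lower : -(|b| * B + H / |b|) ≤ ∫ s in (-T)..T, 2 * f s * h s := by
    rw [← rhs_eq, ← intervalIntegral.integral_neg]
    apply intervalIntegral.integral_mono_on hTT (Irhs.neg) Ifh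
    intro s hs
    have := amgm |b| (-(f s)) (h s) habs
    simp only [neg_sq, Pi.neg_apply] at this ⊢
    nlinarith [this]
  -- the main L² bound on f
  have hfsq : B ≤ (1 / b ^ 2) * H := by
    rcases hbc with ⟨hbpos, hfz⟩ | ⟨hbneg, hfz⟩
    · have habs' : |b| = b := abs_of_pos hbpos
      rw [habs'] at upper lower
      have key : 2 * b * B ≤ ∫ s in (-T)..T, 2 * f s * h s := by
        have e := split
        rw [ftc, hfz] at e
        nlinarith [sq_nonneg (f T)]
      have h2 : b * B ≤ H / b := by linarith
      rw [le_div_iff₀ hbpos] at h2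
      rw [one_div, inv_mul_eq_div, le_div_iff₀ hb2]
      nlinarith
    · have habs' : |b| = -b := abs_of_neg hbneg
      rw [habs'] at upper lower
      have key : ∫ s in (-T)..T, 2 * f s * h s ≤ 2 * b * B := by
        have e := split
        rw [ftc, hfz] at e
        nlinarith [sq_nonneg (f (-T))]
      -- lower : -(-b*B + H/(-b)) ≤ ∫ 2fh ≤ 2bB
      have h1 : b * B + H / b ≤ 2 * b * B := by
        have := lower.trans key
        rw [div_neg] at this
        linarith
      have h2 : H / b ≤ b * B := by linarith
      -- divide by b < 0
      rw [div_le_iff_of_neg hbneg] at h2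
      rw [one_div, inv_mul_eq_div, le_div_iff₀ hb2]
      nlinarith
  -- bound on g
  have hgsq : ∫ s in (-T)..T, g s ^ 2 ≤ 2 * H + 2 * b ^ 2 * B := by
    have Irhs2 : IntervalIntegrable (fun s => 2 * h s ^ 2 + 2 * b ^ 2 * f s ^ 2)
        MeasureTheory.volume (-T) T := by
      apply ContinuousOn.intervalIntegrable; rw [huIcc]
      exact (continuousOn_const.mul (hh.pow 2)).add (continuousOn_const.mul (cf.pow 2))
    have : ∫ s in (-T)..T, g s ^ 2 ≤ ∫ s in (-T)..T, (2 * h s ^ 2 + 2 * b ^ 2 * f s ^ 2) := by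
      apply intervalIntegral.integral_mono_on hTT Ig Irhs2
      intro s hs
      show g s ^ 2 ≤ 2 * h s ^ 2 + 2 * b ^ 2 * f s ^ 2
      have hgs : g s = h s - b * f s := by linarith [hode s hs]
      rw [hgs]
      nlinarith [sq_nonneg (h s + b * f s)]
    rw [intervalIntegral.integral_add (Ih.const_mul _) (If.const_mul _),
      intervalIntegral.integral_const_mul, intervalIntegral.integral_const_mul] at this
    exact this
  rw [intervalIntegral.integral_add If Ig]
  have hb2B : 2 * b ^ 2 * B ≤ 2 * H := by
    have := mul_le_mul_of_nonneg_left hfsq (le_of_lt (by positivity : (0:ℝ) < 2 * b ^ 2))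
    calc 2 * b ^ 2 * B ≤ 2 * b ^ 2 * ((1 / b ^ 2) * H) := this
      _ = 2 * H := by field_simp
  have : (1 / b ^ 2) * H + (2 * H + 2 * H) = (1 / b ^ 2 + 4) * H := by ring
  linarith

lemma euc_norm_sq {n : ℕ} (x : EuclideanSpace ℝ (Fin n)) :
    ‖x‖ ^ 2 = ∑ i, x i ^ 2 := by
  rw [EuclideanSpace.norm_eq, Real.sq_sqrt (by positivity)]
  congr 1; ext i; rw [Real.norm_eq_abs, sq_abs]


/-- **Uniform bound for the right inverse.** Let `A = diag(a₁,…,aₙ)` with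
`a₁ ≥ … ≥ a_{n-k} > 0 > a_{n-k+1} ≥ … ≥ aₙ`.  There is a constant `c > 0`
depending only on the diagonal entries (and not on `T`) such that for every
`T > 0`, every continuous `η : [-T,T] → ℝⁿ` and every continuously
differentiable `ζ : [-T,T] → ℝⁿ` with `ζ' + A ζ = η`, `p₊ ζ(-T) = 0` and
`p₋ ζ(T) = 0`, one has `‖ζ‖_{W^{1,2}([-T,T])} ≤ c ‖η‖_{L²([-T,T])}`. -/
theorem right_inverse_uniform_bound (n k : ℕ) (hn : 1 ≤ n) (hkn : k ≤ n)
    (a : Fin n → ℝ)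
    (ha_mono : ∀ i j : Fin n, i ≤ j → a j ≤ a i)
    (ha_pos : ∀ i : Fin n, (i : ℕ) < n - k → 0 < a i)
    (ha_neg : ∀ i : Fin n, n - k ≤ (i : ℕ) → a i < 0) :
    ∃ c : ℝ, 0 < c ∧
      ∀ T : ℝ, 0 < T →
      ∀ η : ℝ → EuclideanSpace ℝ (Fin n), ContinuousOn η (Icc (-T) T) →
      ∀ ζ ζd : ℝ → EuclideanSpace ℝ (Fin n),
        (∀ s ∈ Icc (-T) T, HasDerivWithinAt ζ (ζd s) (Icc (-T) T) s) →
        ContinuousOn ζd (Icc (-T) T) →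
        (∀ s ∈ Icc (-T) T, ∀ i : Fin n, ζd s i + a i * ζ s i = η s i) →
        (∀ i : Fin n, (i : ℕ) < n - k → ζ (-T) i = 0) →
        (∀ i : Fin n, n - k ≤ (i : ℕ) → ζ T i = 0) →
        Real.sqrt (∫ s in (-T)..T, (‖ζ s‖ ^ 2 + ‖ζd s‖ ^ 2)) ≤
          c * Real.sqrt (∫ s in (-T)..T, ‖η s‖ ^ 2) := by
  have hne : Nonempty (Fin n) := ⟨⟨0, hn⟩⟩
  set m : ℝ := Finset.univ.inf' Finset.univ_nonempty (fun i => |a i|) with hm_def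
  have hane : ∀ i : Fin n, a i ≠ 0 := by
    intro i
    rcases lt_or_ge (i : ℕ) (n - k) with hi | hi
    · exact ne_of_gt (ha_pos i hi)
    · exact ne_of_lt (ha_neg i hi)
  have hm : 0 < m := by
    rw [hm_def, Finset.lt_inf'_iff]
    exact fun i _ => abs_pos.mpr (hane i)
  have hmle : ∀ i : Fin n, m ≤ |a i| := fun i =>
    Finset.inf'_le _ (Finset.mem_univ i)
  set C : ℝ := 1 / m ^ 2 + 4 with hC_def
  have hC : 0 < C := by positivity
  refine ⟨Real.sqrt C, Real.sqrt_pos.mpr hC, ?_⟩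
  intro T hT η hη ζ ζd hζ hζd hode hbc1 hbc2
  have hTT : (-T) ≤ T := by linarith
  have huIcc : uIcc (-T) T = Icc (-T) T := uIcc_of_le hTT
  have hζc : ContinuousOn ζ (Icc (-T) T) := fun s hs => (hζ s hs).continuousWithinAt
  -- component facts
  have hcomp : ∀ i : Fin n,
      ∫ s in (-T)..T, ((ζ s i) ^ 2 + (ζd s i) ^ 2) ≤
        C * ∫ s in (-T)..T, (η s i) ^ 2 := by
    intro i
    have hfd : ∀ s ∈ Icc (-T) T,
        HasDerivWithinAt (fun s => ζ s i) (ζd s i) (Icc (-T) T) s := by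
      intro s hs
      exact (EuclideanSpace.proj (𝕜 := ℝ) i).hasFDerivAt.comp_hasDerivWithinAt s (hζ s hs)
    have hgc : ContinuousOn (fun s => ζd s i) (Icc (-T) T) :=
      (EuclideanSpace.proj (𝕜 := ℝ) i).continuous.comp_continuousOn hζd
    have hhc : ContinuousOn (fun s => η s i) (Icc (-T) T) :=
      (EuclideanSpace.proj (𝕜 := ℝ) i).continuous.comp_continuousOn hη
    have hodei : ∀ s ∈ Icc (-T) T, ζd s i + a i * ζ s i = η s i :=
      fun s hs => hode s hs i
    have hbci : (0 < a i ∧ ζ (-T) i = 0) ∨ (a i < 0 ∧ ζ T i = 0) := by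
      rcases lt_or_ge (i : ℕ) (n - k) with hi | hi
      · exact Or.inl ⟨ha_pos i hi, hbc1 i hi⟩
      · exact Or.inr ⟨ha_neg i hi, hbc2 i hi⟩
    have key := comp_bound T (a i) hT (hane i) (fun s => ζ s i) (fun s => ζd s i)
      (fun s => η s i) hfd hgc hhc hodei hbci
    have hHnn : 0 ≤ ∫ s in (-T)..T, (η s i) ^ 2 :=
      intervalIntegral.integral_nonneg hTT (fun s _ => sq_nonneg _)
    have hfac : 1 / (a i) ^ 2 + 4 ≤ C := by
      rw [hC_def]
      have h1 : m ^ 2 ≤ (a i) ^ 2 := by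
        have := hmle i
        nlinarith [abs_nonneg (a i), sq_abs (a i)]
      have := one_div_le_one_div_of_le (by positivity) h1
      linarith
    calc ∫ s in (-T)..T, ((ζ s i) ^ 2 + (ζd s i) ^ 2)
        ≤ (1 / (a i) ^ 2 + 4) * ∫ s in (-T)..T, (η s i) ^ 2 := key
      _ ≤ C * ∫ s in (-T)..T, (η s i) ^ 2 :=
          mul_le_mul_of_nonneg_right hfac hHnn
  -- integrability of components
  have Ii : ∀ i : Fin n, IntervalIntegrable (fun s => (ζ s i) ^ 2 + (ζd s i) ^ 2)
      MeasureTheory.volume (-T) T := by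
    intro i
    apply ContinuousOn.intervalIntegrable; rw [huIcc]
    exact (((EuclideanSpace.proj (𝕜 := ℝ) i).continuous.comp_continuousOn hζc).pow 2).add
      (((EuclideanSpace.proj (𝕜 := ℝ) i).continuous.comp_continuousOn hζd).pow 2)
  have Ihi : ∀ i : Fin n, IntervalIntegrable (fun s => (η s i) ^ 2)
      MeasureTheory.volume (-T) T := by
    intro i
    apply ContinuousOn.intervalIntegrable; rw [huIcc]
    exact ((EuclideanSpace.proj (𝕜 := ℝ) i).continuous.comp_continuousOn hη).pow 2
  -- rewrite both integrals as sums
  have lhs_eq : ∫ s in (-T)..T, (‖ζ s‖ ^ 2 + ‖ζd s‖ ^ 2)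
      = ∑ i, ∫ s in (-T)..T, ((ζ s i) ^ 2 + (ζd s i) ^ 2) := by
    rw [← intervalIntegral.integral_finset_sum (fun i _ => Ii i)]
    apply intervalIntegral.integral_congr
    intro s hs
    show ‖ζ s‖ ^ 2 + ‖ζd s‖ ^ 2 = ∑ i, ((ζ s i) ^ 2 + (ζd s i) ^ 2)
    rw [euc_norm_sq (ζ s), euc_norm_sq (ζd s), ← Finset.sum_add_distrib]
  have rhs_eq : ∫ s in (-T)..T, ‖η s‖ ^ 2
      = ∑ i, ∫ s in (-T)..T, (η s i) ^ 2 := by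
    rw [← intervalIntegral.integral_finset_sum (fun i _ => Ihi i)]
    apply intervalIntegral.integral_congr
    intro s hs
    show ‖η s‖ ^ 2 = ∑ i, (η s i) ^ 2
    rw [euc_norm_sq (η s)]
  have main : ∫ s in (-T)..T, (‖ζ s‖ ^ 2 + ‖ζd s‖ ^ 2)
      ≤ C * ∫ s in (-T)..T, ‖η s‖ ^ 2 := by
    rw [lhs_eq, rhs_eq, Finset.mul_sum]
    exact Finset.sum_le_sum (fun i _ => hcomp i)
  have := Real.sqrt_le_sqrt main
  rw [Real.sqrt_mul hC.le] at this
  exact this
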